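/- Let P_• be a multiplicative oversimplicial object in a category C with finite limits, and let f_• : Q_• → P_• be a morphism of oversimplicial objects such that f₀ : Q₀ → P₀ is a monomorphism. Then Q_• is multiplicative if and only if f_• is a multiplicative morphism. -/

import Mathlib

open CategoryTheory CategoryTheory.Limits

/-- The category `Δ̃` whose objects are the finite sets `[0,n] = {0,…,n}` (encoded by `n : ℕ`)
and whose morphisms are all set maps. -/
abbrev OSCat : Type := ℕ

instance : Category OSCat where
  Hom n m := Fin (n + 1) → Fin (m + 1)
  id _ := id
  comp f g := g ∘ f

/-- The object `[0,n]` of `Δ̃`. -/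
abbrev OS (n : ℕ) : OSCat := n

/-- The inclusion `[0,m] → [0,m+l]`. -/
def inclHom (m l : ℕ) : OS m ⟶ OS (m + l) :=
  show Fin (m + 1) → Fin (m + l + 1) from fun i => ⟨i, by omega⟩

/-- The shift `[0,l] → [0,m+l]`, `i ↦ m + i`. -/
def shiftHom (m l : ℕ) : OS l ⟶ OS (m + l) :=
  show Fin (l + 1) → Fin (m + l + 1) from fun i => ⟨m + i, by omega⟩

/-- The map `[0] → [0,m]` sending `0` to `m`. -/
def toLastHom (m : ℕ) : OS 0 ⟶ OS m :=
  fun _ => Fin.last m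

/-- The map `[0] → [0,l]` sending `0` to `0`. -/
def toZeroHom (l : ℕ) : OS 0 ⟶ OS l :=
  fun _ => 0

variable {C : Type*} [Category C]

/-- An oversimplicial object `P` of `C` (a contravariant functor `Δ̃ → C`) is multiplicative if
every additive cocartesian diagram `[0,m] ← [0] → [0,l]` with pushout `[0,m+l]` induces a
cartesian diagram `P_m ← P_{m+l} → P_l` over `P₀`. -/
def IsMultOS (P : OSCatᵒᵖ ⥤ C) : Prop :=
  ∀ m l : ℕ,
    IsPullback (P.map (inclHom m l).op) (P.map (shiftHom m l).op)
      (P.map (toLastHom m).op) (P.map (toZeroHom l).op)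

/-- A morphism `f : Q → P` of oversimplicial objects is multiplicative if for every additive
cocartesian diagram `[0,m] ← [0] → [0,l]` with pushout `[0,n]`, the square with corners
`Q_m ×_{P_m} P_n`, `Q_n`, `Q_l ×_{P_l} P_n` and `P_n` is cartesian. -/
def IsMultHomOS [HasPullbacks C] {Q P : OSCatᵒᵖ ⥤ C} (f : Q ⟶ P) : Prop :=
  ∀ m l : ℕ,
    IsPullback
      (pullback.lift (Q.map (inclHom m l).op) (f.app (Opposite.op (OS (m + l))))
        (f.naturality (inclHom m l).op) :
          Q.obj (Opposite.op (OS (m + l))) ⟶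
            pullback (f.app (Opposite.op (OS m))) (P.map (inclHom m l).op))
      (pullback.lift (Q.map (shiftHom m l).op) (f.app (Opposite.op (OS (m + l))))
        (f.naturality (shiftHom m l).op) :
          Q.obj (Opposite.op (OS (m + l))) ⟶
            pullback (f.app (Opposite.op (OS l))) (P.map (shiftHom m l).op))
      (pullback.snd (f.app (Opposite.op (OS m))) (P.map (inclHom m l).op))
      (pullback.snd (f.app (Opposite.op (OS l))) (P.map (shiftHom m l).op))


section AuxLemmas

open Opposite

variable {C : Type*} [Category C]

/-- Composing the feet of a pullback square with a monomorphism preserves and reflects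
the pullback property. -/
lemma pb_comp_mono_iff {W X Y Z Z' : C} (fst : W ⟶ X) (snd : W ⟶ Y) (f : X ⟶ Z) (g : Y ⟶ Z)
    (e : Z ⟶ Z') [Mono e] (comm : fst ≫ f = snd ≫ g) :
    IsPullback fst snd f g ↔ IsPullback fst snd (f ≫ e) (g ≫ e) := by
  constructor
  · intro h
    refine IsPullback.of_isLimit' ⟨by rw [← Category.assoc, comm, Category.assoc]⟩ ?_
    refine PullbackCone.IsLimit.mk _
      (fun c => h.lift c.fst c.snd ?_) (fun c => ?_) (fun c => ?_) (fun c w h1 h2 => ?_)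
    · have hc := c.condition
      rw [← Category.assoc, ← Category.assoc] at hc
      exact (cancel_mono e).1 (by simpa using hc)
    · simp
    · simp
    · apply h.hom_ext <;> simp [h1, h2]
  · intro h
    refine IsPullback.of_isLimit' ⟨comm⟩ ?_
    refine PullbackCone.IsLimit.mk _
      (fun c => h.lift c.fst c.snd (by rw [← Category.assoc, c.condition, Category.assoc]))
      (fun c => ?_) (fun c => ?_) (fun c w h1 h2 => ?_)
    · simp
    · simp
    · apply h.hom_ext <;> simp [h1, h2]

/-- The basic commutation in `Δ̃`. -/
lemma os_comm (m l : ℕ) :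
    toLastHom m ≫ inclHom m l = toZeroHom l ≫ shiftHom m l := by
  funext j
  show inclHom m l (toLastHom m j) = shiftHom m l (toZeroHom l j)
  apply Fin.ext
  simp [inclHom, shiftHom, toLastHom, toZeroHom, Fin.last]

lemma claimB [HasPullbacks C] {Q P : OSCatᵒᵖ ⥤ C} (f : Q ⟶ P) (m l : ℕ)
    (hP : IsPullback (P.map (inclHom m l).op) (P.map (shiftHom m l).op)
      (P.map (toLastHom m).op) (P.map (toZeroHom l).op)) :
    IsPullback
      (pullback.lift (Q.map (inclHom m l).op) (f.app (Opposite.op (OS (m + l))))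
        (f.naturality (inclHom m l).op) :
          Q.obj (Opposite.op (OS (m + l))) ⟶
            pullback (f.app (Opposite.op (OS m))) (P.map (inclHom m l).op))
      (pullback.lift (Q.map (shiftHom m l).op) (f.app (Opposite.op (OS (m + l))))
        (f.naturality (shiftHom m l).op) :
          Q.obj (Opposite.op (OS (m + l))) ⟶
            pullback (f.app (Opposite.op (OS l))) (P.map (shiftHom m l).op))
      (pullback.snd (f.app (Opposite.op (OS m))) (P.map (inclHom m l).op))
      (pullback.snd (f.app (Opposite.op (OS l))) (P.map (shiftHom m l).op)) ↔
    IsPullback (Q.map (inclHom m l).op) (Q.map (shiftHom m l).op)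
      (Q.map (toLastHom m).op ≫ f.app (Opposite.op (OS 0)))
      (Q.map (toZeroHom l).op ≫ f.app (Opposite.op (OS 0))) := by
  have nata : Q.map (toLastHom m).op ≫ f.app (op (OS 0)) =
      f.app (op (OS m)) ≫ P.map (toLastHom m).op := f.naturality _
  have natz : Q.map (toZeroHom l).op ≫ f.app (op (OS 0)) =
      f.app (op (OS l)) ≫ P.map (toZeroHom l).op := f.naturality _
  have nats : Q.map (shiftHom m l).op ≫ f.app (op (OS l)) =
      f.app (op (OS (m + l))) ≫ P.map (shiftHom m l).op := f.naturality _
  have pbM := IsPullback.of_hasPullback (f.app (Opposite.op (OS m))) (P.map (inclHom m l).op)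
  have pbL := IsPullback.of_hasPullback (f.app (Opposite.op (OS l))) (P.map (shiftHom m l).op)
  -- step 1 : un-paste the right-hand pullback square for `Q_l`
  have e1 : (pullback.lift (Q.map (inclHom m l).op) (f.app (Opposite.op (OS (m + l))))
        (f.naturality (inclHom m l).op)) ≫
        pullback.snd (f.app (Opposite.op (OS m))) (P.map (inclHom m l).op) =
      (pullback.lift (Q.map (shiftHom m l).op) (f.app (Opposite.op (OS (m + l))))
        (f.naturality (shiftHom m l).op)) ≫
        pullback.snd (f.app (Opposite.op (OS l))) (P.map (shiftHom m l).op) := by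
    exact (pullback.lift_snd _ _ _).trans (pullback.lift_snd _ _ _).symm
  have step1 := (IsPullback.paste_vert_iff pbL.flip e1).symm
  rw [pullback.lift_fst (Q.map (shiftHom m l).op) (f.app (Opposite.op (OS (m + l))))
    (f.naturality (shiftHom m l).op)] at step1
  -- the long rectangle `PbM → P_l → P_0` over `Q_m → P_0`
  have A := pbM.flip.paste_horiz hP.flip
  have e2 : Q.map (shiftHom m l).op ≫ f.app (Opposite.op (OS l)) =
      (pullback.lift (Q.map (inclHom m l).op) (f.app (Opposite.op (OS (m + l))))
        (f.naturality (inclHom m l).op)) ≫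
        pullback.snd (f.app (Opposite.op (OS m))) (P.map (inclHom m l).op) ≫
          P.map (shiftHom m l).op := by
    rw [nats, ← Category.assoc, pullback.lift_snd]
  have step2 := (IsPullback.paste_vert_iff A e2).symm
  rw [pullback.lift_fst (Q.map (inclHom m l).op) (f.app (Opposite.op (OS (m + l))))
    (f.naturality (inclHom m l).op), ← nata, ← natz] at step2
  exact step1.trans (IsPullback.flip_iff.trans (step2.trans IsPullback.flip_iff))

end AuxLemmas

/-- Let `P` be a multiplicative oversimplicial object in a category `C` with
finite limits, and let `f : Q → P` be a morphism of oversimplicial objects such that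
`f₀ : Q₀ → P₀` is a monomorphism.  Then `Q` is multiplicative if and only if `f` is a
multiplicative morphism. -/
theorem stmt_6 {C : Type*} [Category C] [HasFiniteLimits C]
    (P Q : OSCatᵒᵖ ⥤ C) (hP : IsMultOS P) (f : Q ⟶ P)
    (hmono : Mono (f.app (Opposite.op (OS 0)))) :
    IsMultOS Q ↔ IsMultHomOS f := by
  constructor
  · intro hQ m l
    exact (claimB f m l (hP m l)).2
      ((pb_comp_mono_iff _ _ _ _ (f.app (Opposite.op (OS 0)))
        ((hQ m l).w)).1 (hQ m l))
  · intro hf m l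
    have hext := (claimB f m l (hP m l)).1 (hf m l)
    exact (pb_comp_mono_iff _ _ _ _ (f.app (Opposite.op (OS 0)))
      (by rw [← Q.map_comp, ← Q.map_comp, ← op_comp, ← op_comp, os_comm])).2 hext
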